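/- For every cubic (3-regular) graph G, the coalition number satisfies C(G) ≤ 9. -/

import Mathlib

/-- `S` dominates the vertex `v`: `v ∈ S` or some vertex of `S` is adjacent to `v`. -/
def SimpleGraph.DominatesVert {V : Type*} (G : SimpleGraph V) (S : Finset V) (v : V) : Prop :=
  v ∈ S ∨ ∃ u ∈ S, G.Adj u v

/-- `S` is a dominating set of `G`. -/
def SimpleGraph.IsDominatingSet {V : Type*} (G : SimpleGraph V) (S : Finset V) : Prop :=
  ∀ v, G.DominatesVert S v

/-- A coalition partition of `G`: a partition of the vertex set into nonempty parts,
each of which is either a dominating singleton, or a non-dominating set forming a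
coalition (dominating union) with another non-dominating part. -/
def SimpleGraph.IsCoalitionPartition {V : Type*} [Fintype V] [DecidableEq V]
    (G : SimpleGraph V) (P : Finset (Finset V)) : Prop :=
  (∀ A ∈ P, A.Nonempty) ∧
  (∀ A ∈ P, ∀ B ∈ P, A ≠ B → Disjoint A B) ∧
  (∀ v : V, ∃ A ∈ P, v ∈ A) ∧
  ∀ A ∈ P,
    (∃ v, A = {v} ∧ G.IsDominatingSet A) ∨
    (¬ G.IsDominatingSet A ∧
      ∃ B ∈ P, B ≠ A ∧ ¬ G.IsDominatingSet B ∧ G.IsDominatingSet (A ∪ B))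

/-- The coalition number of `G`: the maximum number of parts in a coalition partition. -/
noncomputable def SimpleGraph.coalitionNumber {V : Type*} [Fintype V] [DecidableEq V]
    (G : SimpleGraph V) : ℕ :=
  sSup {k | ∃ P : Finset (Finset V), G.IsCoalitionPartition P ∧ P.card = k}

set_option maxHeartbeats 1600000


private lemma card_aux {α : Type*} [DecidableEq α] {s t : Finset α} (u : Finset α)
    (hu : u ⊆ s) (hd : ∀ x ∈ u, x ∉ t) : (s ∩ t).card + u.card ≤ s.card := by
  have hdisj : Disjoint (s ∩ t) u := by
    rw [Finset.disjoint_right]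
    intro x hxu hxi
    exact hd x hxu (Finset.mem_inter.1 hxi).2
  calc (s ∩ t).card + u.card = ((s ∩ t) ∪ u).card := (Finset.card_union_of_disjoint hdisj).symm
    _ ≤ s.card := Finset.card_le_card (Finset.union_subset Finset.inter_subset_left hu)

private lemma card_aux1 {α : Type*} [DecidableEq α] {s t : Finset α} {a : α}
    (has : a ∈ s) (hat : a ∉ t) : (s ∩ t).card + 1 ≤ s.card := by
  have := card_aux ({a} : Finset α) (Finset.singleton_subset_iff.2 has)
    (by intro x hx; rw [Finset.mem_singleton] at hx; subst hx; exact hat)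
  simpa using this

private lemma card_aux2 {α : Type*} [DecidableEq α] {s t : Finset α} {a b : α}
    (hab : a ≠ b) (has : a ∈ s) (hbs : b ∈ s) (hat : a ∉ t) (hbt : b ∉ t) :
    (s ∩ t).card + 2 ≤ s.card := by
  have hsub : ({a, b} : Finset α) ⊆ s :=
    Finset.insert_subset has (Finset.singleton_subset_iff.2 hbs)
  have hd : ∀ x ∈ ({a, b} : Finset α), x ∉ t := by
    intro x hx
    rcases Finset.mem_insert.1 hx with rfl | hx
    · exact hat
    · rw [Finset.mem_singleton] at hx; subst hx; exact hbt
  have := card_aux _ hsub hd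
  rwa [Finset.card_pair hab] at this

private lemma card_aux3 {α : Type*} [DecidableEq α] {s t : Finset α} {a b c : α}
    (hab : a ≠ b) (hac : a ≠ c) (hbc : b ≠ c)
    (has : a ∈ s) (hbs : b ∈ s) (hcs : c ∈ s)
    (hat : a ∉ t) (hbt : b ∉ t) (hct : c ∉ t) :
    (s ∩ t).card + 3 ≤ s.card := by
  have hsub : ({a, b, c} : Finset α) ⊆ s := by
    refine Finset.insert_subset has (Finset.insert_subset hbs ?_)
    exact Finset.singleton_subset_iff.2 hcs
  have hd : ∀ x ∈ ({a, b, c} : Finset α), x ∉ t := by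
    intro x hx
    rcases Finset.mem_insert.1 hx with rfl | hx
    · exact hat
    · rcases Finset.mem_insert.1 hx with rfl | hx
      · exact hbt
      · rw [Finset.mem_singleton] at hx; subst hx; exact hct
  have hcard : ({a, b, c} : Finset α).card = 3 := by
    rw [Finset.card_insert_of_notMem (by simp [hab, hac]), Finset.card_pair hbc]
  have := card_aux _ hsub hd
  rwa [hcard] at this

private lemma union3card {α : Type*} [DecidableEq α] (A B C : Finset α) :
    2 * (A ∪ B ∪ C).card ≤ (A ∪ B).card + (A ∪ C).card + (B ∪ C).card := by
  have h1 : (A ∪ B ∪ C).card ≤ (A ∪ B).card + (C \ (A ∪ B)).card := by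
    refine le_trans (Finset.card_le_card ?_) (Finset.card_union_le _ _)
    intro x hx
    rcases Finset.mem_union.1 hx with h | h
    · exact Finset.mem_union_left _ h
    · by_cases hx2 : x ∈ A ∪ B
      · exact Finset.mem_union_left _ hx2
      · exact Finset.mem_union_right _ (Finset.mem_sdiff.2 ⟨h, hx2⟩)
  have h2 : (A ∪ B ∪ C).card ≤ (A ∪ C).card + (B \ (A ∪ C)).card := by
    refine le_trans (Finset.card_le_card ?_) (Finset.card_union_le _ _)
    intro x hx
    by_cases hx2 : x ∈ A ∪ C
    · exact Finset.mem_union_left _ hx2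
    · rcases Finset.mem_union.1 hx with h | h
      · rcases Finset.mem_union.1 h with h' | h'
        · exact absurd (Finset.mem_union_left _ h') hx2
        · exact Finset.mem_union_right _ (Finset.mem_sdiff.2 ⟨h', hx2⟩)
      · exact absurd (Finset.mem_union_right _ h) hx2
  have h3 : (C \ (A ∪ B)).card + (B \ (A ∪ C)).card ≤ (B ∪ C).card := by
    have hdisj : Disjoint (C \ (A ∪ B)) (B \ (A ∪ C)) := by
      rw [Finset.disjoint_left]
      intro x hx1 hx2
      exact (Finset.mem_sdiff.1 hx1).2 (Finset.mem_union_right _ (Finset.mem_sdiff.1 hx2).1)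
    calc (C \ (A ∪ B)).card + (B \ (A ∪ C)).card
        = ((C \ (A ∪ B)) ∪ (B \ (A ∪ C))).card := (Finset.card_union_of_disjoint hdisj).symm
      _ ≤ (B ∪ C).card := by
          refine Finset.card_le_card ?_
          intro x hx
          rcases Finset.mem_union.1 hx with h | h
          · exact Finset.mem_union_right _ (Finset.mem_sdiff.1 h).1
          · exact Finset.mem_union_left _ (Finset.mem_sdiff.1 h).1
  omega


private lemma two_cover {α : Type*} [DecidableEq α] (O S1 S2 : Finset α)
    (h : ∀ o ∈ O, o ∈ S1 ∨ o ∈ S2) : O.card ≤ S1.card + S2.card := by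
  have hsub : O ⊆ S1 ∪ S2 := by
    intro o ho
    rcases h o ho with h' | h'
    · exact Finset.mem_union_left _ h'
    · exact Finset.mem_union_right _ h'
  exact le_trans (Finset.card_le_card hsub) (Finset.card_union_le _ _)

private lemma three_cover {α : Type*} [DecidableEq α] (O S1 S2 S3 : Finset α)
    (h : ∀ o ∈ O, o ∈ S1 ∨ o ∈ S2 ∨ o ∈ S3) : O.card ≤ S1.card + S2.card + S3.card := by
  have h2 := two_cover O S1 (S2 ∪ S3) (by
    intro o ho
    rcases h o ho with h' | h' | h'
    · exact Or.inl h'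
    · exact Or.inr (Finset.mem_union_left _ h')
    · exact Or.inr (Finset.mem_union_right _ h'))
  have := Finset.card_union_le S2 S3
  omega

private lemma four_cover {α : Type*} [DecidableEq α] (O S1 S2 S3 S4 : Finset α)
    (h : ∀ o ∈ O, o ∈ S1 ∨ o ∈ S2 ∨ o ∈ S3 ∨ o ∈ S4) :
    O.card ≤ S1.card + S2.card + S3.card + S4.card := by
  have h2 := three_cover O S1 S2 (S3 ∪ S4) (by
    intro o ho
    rcases h o ho with h' | h' | h' | h'
    · exact Or.inl h'
    · exact Or.inr (Or.inl h')
    · exact Or.inr (Or.inr (Finset.mem_union_left _ h'))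
    · exact Or.inr (Or.inr (Finset.mem_union_right _ h')))
  have := Finset.card_union_le S3 S4
  omega

private lemma coalition_abstract {α : Type*} [DecidableEq α] (P C : Finset α) (N : α → Finset α)
    (hsub : ∀ A ∈ P, N A ⊆ P)
    (hirr : ∀ A, A ∉ N A)
    (hsymm : ∀ A ∈ P, ∀ B ∈ N A, A ∈ N B)
    (hdeg : ∀ A ∈ P, (N A).card ≤ 4)
    (hpart : ∀ A ∈ P, (N A).Nonempty)
    (hCP : C ⊆ P) (hCcard : C.card ≤ 4)
    (hCcover : ∀ X ∈ P, X ∉ C → N X ⊆ C)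
    (hpair : ∀ A B, A ∈ P → B ∈ P → A ≠ B → B ∉ N A →
      ∃ D : Finset α, D.card ≤ 4 ∧ A ∉ D ∧ B ∉ D ∧ N A ⊆ D ∧ N B ⊆ D ∧
        ∀ X ∈ P, X ∉ D → N X ⊆ D) :
    P.card ≤ 9 := by
  classical
  set O := P \ C with hO
  have hOcard : O.card + C.card = P.card := Finset.card_sdiff_add_card_eq_card hCP
  have hOP : ∀ X ∈ O, X ∈ P := fun X hX => (Finset.mem_sdiff.1 hX).1
  have hONC : ∀ X ∈ O, X ∉ C := fun X hX => (Finset.mem_sdiff.1 hX).2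
  have hCO : ∀ Y ∈ C, Y ∉ O := fun Y hY hYO => hONC Y hYO hY
  have hPO : ∀ z ∈ P, z ∉ O → z ∈ C := by
    intro z hz hzO
    by_contra hzC
    exact hzO (Finset.mem_sdiff.2 ⟨hz, hzC⟩)
  have hcv : ∀ X ∈ O, ∃ Y ∈ C, X ∈ N Y := by
    intro X hX
    obtain ⟨B, hB⟩ := hpart X (hOP X hX)
    have hBC : B ∈ C := hCcover X (hOP X hX) (hONC X hX) hB
    exact ⟨B, hBC, hsymm X (hOP X hX) B hB⟩
  have hc : C.card = 0 ∨ C.card = 1 ∨ C.card = 2 ∨ C.card = 3 ∨ C.card = 4 := by omega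
  rcases hc with hc | hc | hc | hc | hc
  · have hCemp : C = ∅ := Finset.card_eq_zero.1 hc
    have hPemp : P = ∅ := by
      apply Finset.eq_empty_of_forall_notMem
      intro X hX
      by_cases hXC : X ∈ C
      · rw [hCemp] at hXC; exact absurd hXC (Finset.notMem_empty X)
      · obtain ⟨B, hB⟩ := hpart X hX
        have := hCcover X hX hXC hB
        rw [hCemp] at this
        exact Finset.notMem_empty B this
    simp [hPemp]
  · obtain ⟨Y, hC1⟩ := Finset.card_eq_one.1 hc
    have hYP : Y ∈ P := hCP (by simp [hC1])
    have hsubO : O ⊆ N Y := by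
      intro o ho
      obtain ⟨Z, hZC, hoZ⟩ := hcv o ho
      rw [hC1, Finset.mem_singleton] at hZC
      subst hZC; exact hoZ
    have := Finset.card_le_card hsubO
    have := hdeg Y hYP
    omega
  · obtain ⟨Y1, Y2, d12, hC2⟩ := Finset.card_eq_two.1 hc
    have hY1P : Y1 ∈ P := hCP (by simp [hC2])
    have hY2P : Y2 ∈ P := hCP (by simp [hC2])
    have hY1O : Y1 ∉ O := hCO Y1 (by simp [hC2])
    have hY2O : Y2 ∉ O := hCO Y2 (by simp [hC2])
    have hOsub : O ⊆ (N Y1 ∩ O) ∪ (N Y2 ∩ O) := by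
      intro o ho
      obtain ⟨Z, hZC, hoZ⟩ := hcv o ho
      rw [hC2, Finset.mem_insert, Finset.mem_singleton] at hZC
      rcases hZC with rfl | rfl
      · exact Finset.mem_union_left _ (Finset.mem_inter.2 ⟨hoZ, ho⟩)
      · exact Finset.mem_union_right _ (Finset.mem_inter.2 ⟨hoZ, ho⟩)
    by_cases e : Y2 ∈ N Y1
    · have h1 : (N Y1 ∩ O).card + ({Y2} : Finset α).card ≤ (N Y1).card :=
        card_aux _ (by simp [e]) (by simp [hY2O])
      have h2 : (N Y2 ∩ O).card + ({Y1} : Finset α).card ≤ (N Y2).card :=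
        card_aux _ (by simp [hsymm Y1 hY1P Y2 e]) (by simp [hY1O])
      have h3 := Finset.card_le_card hOsub
      have h4 := Finset.card_union_le (N Y1 ∩ O) (N Y2 ∩ O)
      have := hdeg Y1 hY1P; have := hdeg Y2 hY2P
      simp only [Finset.card_singleton] at h1 h2
      omega
    · obtain ⟨D, hDc, hAD, hBD, hNAD, hNBD, hDcov⟩ := hpair Y1 Y2 hY1P hY2P d12 e
      have hOD : O ⊆ D := by
        intro o ho
        obtain ⟨Z, hZC, hoZ⟩ := hcv o ho
        rw [hC2, Finset.mem_insert, Finset.mem_singleton] at hZC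
        rcases hZC with rfl | rfl
        · exact hNAD hoZ
        · exact hNBD hoZ
      have := Finset.card_le_card hOD
      omega
  · obtain ⟨Y1, Y2, Y3, d12, d13, d23, hC3⟩ := Finset.card_eq_three.1 hc
    have hY1P : Y1 ∈ P := hCP (by simp [hC3])
    have hY2P : Y2 ∈ P := hCP (by simp [hC3])
    have hY3P : Y3 ∈ P := hCP (by simp [hC3])
    have hY1O : Y1 ∉ O := hCO Y1 (by simp [hC3])
    have hY2O : Y2 ∉ O := hCO Y2 (by simp [hC3])
    have hY3O : Y3 ∉ O := hCO Y3 (by simp [hC3])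
    have hOsub : ∀ o ∈ O, o ∈ N Y1 ∨ o ∈ N Y2 ∨ o ∈ N Y3 := by
      intro o ho
      obtain ⟨Z, hZC, hoZ⟩ := hcv o ho
      rw [hC3] at hZC
      simp only [Finset.mem_insert, Finset.mem_singleton] at hZC
      rcases hZC with rfl | rfl | rfl
      · exact Or.inl hoZ
      · exact Or.inr (Or.inl hoZ)
      · exact Or.inr (Or.inr hoZ)
    suffices h : O.card ≤ 6 by omega
    -- helper to bound |O| by |S1| + |S2| for a cover O ⊆ S1 ∪ S2
    have two_cover : ∀ S1 S2 : Finset α, (∀ o ∈ O, o ∈ S1 ∨ o ∈ S2) →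
        O.card ≤ S1.card + S2.card := by
      intro S1 S2 hcov
      have : O ⊆ S1 ∪ S2 := by
        intro o ho
        rcases hcov o ho with h | h
        · exact Finset.mem_union_left _ h
        · exact Finset.mem_union_right _ h
      exact le_trans (Finset.card_le_card this) (Finset.card_union_le _ _)
    have three_cover : ∀ S1 S2 S3 : Finset α, (∀ o ∈ O, o ∈ S1 ∨ o ∈ S2 ∨ o ∈ S3) →
        O.card ≤ S1.card + S2.card + S3.card := by
      intro S1 S2 S3 hcov
      have : O ⊆ S1 ∪ (S2 ∪ S3) := by
        intro o ho
        rcases hcov o ho with h | h | h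
        · exact Finset.mem_union_left _ h
        · exact Finset.mem_union_right _ (Finset.mem_union_left _ h)
        · exact Finset.mem_union_right _ (Finset.mem_union_right _ h)
      have h1 := Finset.card_le_card this
      have h2 := Finset.card_union_le S1 (S2 ∪ S3)
      have h3 := Finset.card_union_le S2 S3
      omega
    by_cases e12 : Y2 ∈ N Y1 <;> by_cases e13 : Y3 ∈ N Y1 <;> by_cases e23 : Y3 ∈ N Y2
    · -- TTT
      have h1 : (N Y1 ∩ O).card + 2 ≤ (N Y1).card := card_aux2 d23 e12 e13 hY2O hY3O
      have h2 : (N Y2 ∩ O).card + 2 ≤ (N Y2).card :=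
        card_aux2 d13 (hsymm Y1 hY1P Y2 e12) e23 hY1O hY3O
      have h3 : (N Y3 ∩ O).card + 2 ≤ (N Y3).card :=
        card_aux2 d12 (hsymm Y1 hY1P Y3 e13) (hsymm Y2 hY2P Y3 e23) hY1O hY2O
      have hO3 := three_cover (N Y1 ∩ O) (N Y2 ∩ O) (N Y3 ∩ O) (by
        intro o ho
        rcases hOsub o ho with h | h | h
        · exact Or.inl (Finset.mem_inter.2 ⟨h, ho⟩)
        · exact Or.inr (Or.inl (Finset.mem_inter.2 ⟨h, ho⟩))
        · exact Or.inr (Or.inr (Finset.mem_inter.2 ⟨h, ho⟩)))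
      have := hdeg Y1 hY1P; have := hdeg Y2 hY2P; have := hdeg Y3 hY3P
      omega
    · -- TTF : e12, e13, ¬e23
      have h1 : (N Y1 ∩ O).card + 2 ≤ (N Y1).card := card_aux2 d23 e12 e13 hY2O hY3O
      obtain ⟨D, hDc, hAD, hBD, hNAD, hNBD, hDcov⟩ := hpair Y2 Y3 hY2P hY3P d23 e23
      have hY1D : Y1 ∈ D := hNAD (hsymm Y1 hY1P Y2 e12)
      have hDO : (D ∩ O).card + 1 ≤ D.card := card_aux1 hY1D hY1O
      have hO2 := two_cover (N Y1 ∩ O) (D ∩ O) (by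
        intro o ho
        rcases hOsub o ho with h | h | h
        · exact Or.inl (Finset.mem_inter.2 ⟨h, ho⟩)
        · exact Or.inr (Finset.mem_inter.2 ⟨hNAD h, ho⟩)
        · exact Or.inr (Finset.mem_inter.2 ⟨hNBD h, ho⟩))
      have := hdeg Y1 hY1P
      omega
    · -- TFT : e12, ¬e13, e23
      have h2 : (N Y2 ∩ O).card + 2 ≤ (N Y2).card :=
        card_aux2 d13 (hsymm Y1 hY1P Y2 e12) e23 hY1O hY3O
      obtain ⟨D, hDc, hAD, hBD, hNAD, hNBD, hDcov⟩ := hpair Y1 Y3 hY1P hY3P d13 e13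
      have hY2D : Y2 ∈ D := hNAD e12
      have hDO : (D ∩ O).card + 1 ≤ D.card := card_aux1 hY2D hY2O
      have hO2 := two_cover (N Y2 ∩ O) (D ∩ O) (by
        intro o ho
        rcases hOsub o ho with h | h | h
        · exact Or.inr (Finset.mem_inter.2 ⟨hNAD h, ho⟩)
        · exact Or.inl (Finset.mem_inter.2 ⟨h, ho⟩)
        · exact Or.inr (Finset.mem_inter.2 ⟨hNBD h, ho⟩))
      have := hdeg Y2 hY2P
      omega
    · -- TFF : e12, ¬e13, ¬e23
      obtain ⟨D, hDc, hAD, hBD, hNAD, hNBD, hDcov⟩ := hpair Y1 Y3 hY1P hY3P d13 e13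
      have hY2D : Y2 ∈ D := hNAD e12
      have hDO : (D ∩ O).card + 1 ≤ D.card := card_aux1 hY2D hY2O
      have h2 : (N Y2 ∩ O).card + 1 ≤ (N Y2).card := card_aux1 (hsymm Y1 hY1P Y2 e12) hY1O
      have hO2 := two_cover (N Y2 ∩ O) (D ∩ O) (by
        intro o ho
        rcases hOsub o ho with h | h | h
        · exact Or.inr (Finset.mem_inter.2 ⟨hNAD h, ho⟩)
        · exact Or.inl (Finset.mem_inter.2 ⟨h, ho⟩)
        · exact Or.inr (Finset.mem_inter.2 ⟨hNBD h, ho⟩))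
      have := hdeg Y2 hY2P
      omega
    · -- FTT : ¬e12, e13, e23
      have h3 : (N Y3 ∩ O).card + 2 ≤ (N Y3).card :=
        card_aux2 d12 (hsymm Y1 hY1P Y3 e13) (hsymm Y2 hY2P Y3 e23) hY1O hY2O
      obtain ⟨D, hDc, hAD, hBD, hNAD, hNBD, hDcov⟩ := hpair Y1 Y2 hY1P hY2P d12 e12
      have hY3D : Y3 ∈ D := hNAD e13
      have hDO : (D ∩ O).card + 1 ≤ D.card := card_aux1 hY3D hY3O
      have hO2 := two_cover (N Y3 ∩ O) (D ∩ O) (by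
        intro o ho
        rcases hOsub o ho with h | h | h
        · exact Or.inr (Finset.mem_inter.2 ⟨hNAD h, ho⟩)
        · exact Or.inr (Finset.mem_inter.2 ⟨hNBD h, ho⟩)
        · exact Or.inl (Finset.mem_inter.2 ⟨h, ho⟩))
      have := hdeg Y3 hY3P
      omega
    · -- FTF : ¬e12, e13, ¬e23
      obtain ⟨D, hDc, hAD, hBD, hNAD, hNBD, hDcov⟩ := hpair Y1 Y2 hY1P hY2P d12 e12
      have hY3D : Y3 ∈ D := hNAD e13
      have hDO : (D ∩ O).card + 1 ≤ D.card := card_aux1 hY3D hY3O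
      have h3 : (N Y3 ∩ O).card + 1 ≤ (N Y3).card := card_aux1 (hsymm Y1 hY1P Y3 e13) hY1O
      have hO2 := two_cover (N Y3 ∩ O) (D ∩ O) (by
        intro o ho
        rcases hOsub o ho with h | h | h
        · exact Or.inr (Finset.mem_inter.2 ⟨hNAD h, ho⟩)
        · exact Or.inr (Finset.mem_inter.2 ⟨hNBD h, ho⟩)
        · exact Or.inl (Finset.mem_inter.2 ⟨h, ho⟩))
      have := hdeg Y3 hY3P
      omega
    · -- FFT : ¬e12, ¬e13, e23
      obtain ⟨D, hDc, hAD, hBD, hNAD, hNBD, hDcov⟩ := hpair Y1 Y2 hY1P hY2P d12 e12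
      have hY3D : Y3 ∈ D := hNBD e23
      have hDO : (D ∩ O).card + 1 ≤ D.card := card_aux1 hY3D hY3O
      have h3 : (N Y3 ∩ O).card + 1 ≤ (N Y3).card := card_aux1 (hsymm Y2 hY2P Y3 e23) hY2O
      have hO2 := two_cover (N Y3 ∩ O) (D ∩ O) (by
        intro o ho
        rcases hOsub o ho with h | h | h
        · exact Or.inr (Finset.mem_inter.2 ⟨hNAD h, ho⟩)
        · exact Or.inr (Finset.mem_inter.2 ⟨hNBD h, ho⟩)
        · exact Or.inl (Finset.mem_inter.2 ⟨h, ho⟩))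
      have := hdeg Y3 hY3P
      omega
    · -- FFF : independent triple
      obtain ⟨D12, hD12c, _, _, hNA12, hNB12, _⟩ := hpair Y1 Y2 hY1P hY2P d12 e12
      obtain ⟨D13, hD13c, _, _, hNA13, hNB13, _⟩ := hpair Y1 Y3 hY1P hY3P d13 e13
      obtain ⟨D23, hD23c, _, _, hNA23, hNB23, _⟩ := hpair Y2 Y3 hY2P hY3P d23 e23
      set Q1 := N Y1 ∩ O
      set Q2 := N Y2 ∩ O
      set Q3 := N Y3 ∩ O
      have hu12 : (Q1 ∪ Q2).card ≤ 4 := by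
        have : Q1 ∪ Q2 ⊆ D12 := by
          intro x hx
          rcases Finset.mem_union.1 hx with h | h
          · exact hNA12 (Finset.mem_inter.1 h).1
          · exact hNB12 (Finset.mem_inter.1 h).1
        exact le_trans (Finset.card_le_card this) hD12c
      have hu13 : (Q1 ∪ Q3).card ≤ 4 := by
        have : Q1 ∪ Q3 ⊆ D13 := by
          intro x hx
          rcases Finset.mem_union.1 hx with h | h
          · exact hNA13 (Finset.mem_inter.1 h).1
          · exact hNB13 (Finset.mem_inter.1 h).1
        exact le_trans (Finset.card_le_card this) hD13c
      have hu23 : (Q2 ∪ Q3).card ≤ 4 := by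
        have : Q2 ∪ Q3 ⊆ D23 := by
          intro x hx
          rcases Finset.mem_union.1 hx with h | h
          · exact hNA23 (Finset.mem_inter.1 h).1
          · exact hNB23 (Finset.mem_inter.1 h).1
        exact le_trans (Finset.card_le_card this) hD23c
      have hun := union3card Q1 Q2 Q3
      have hOQ : O ⊆ Q1 ∪ Q2 ∪ Q3 := by
        intro o ho
        rcases hOsub o ho with h | h | h
        · exact Finset.mem_union_left _ (Finset.mem_union_left _ (Finset.mem_inter.2 ⟨h, ho⟩))
        · exact Finset.mem_union_left _ (Finset.mem_union_right _ (Finset.mem_inter.2 ⟨h, ho⟩))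
        · exact Finset.mem_union_right _ (Finset.mem_inter.2 ⟨h, ho⟩)
      have := Finset.card_le_card hOQ
      omega
  · obtain ⟨Y1, s3, hY1s, hins, hs3⟩ := Finset.card_eq_succ.1 hc
    obtain ⟨Y2, Y3, Y4, d23, d24, d34, hs3eq⟩ := Finset.card_eq_three.1 hs3
    subst hs3eq
    have hC4 : C = {Y1, Y2, Y3, Y4} := by rw [← hins]
    have d12 : Y1 ≠ Y2 := by intro h; apply hY1s; rw [h]; simp
    have d13 : Y1 ≠ Y3 := by intro h; apply hY1s; rw [h]; simp
    have d14 : Y1 ≠ Y4 := by intro h; apply hY1s; rw [h]; simp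
    have hY1P : Y1 ∈ P := hCP (by simp [hC4])
    have hY2P : Y2 ∈ P := hCP (by simp [hC4])
    have hY3P : Y3 ∈ P := hCP (by simp [hC4])
    have hY4P : Y4 ∈ P := hCP (by simp [hC4])
    have hY1O : Y1 ∉ O := hCO Y1 (by simp [hC4])
    have hY2O : Y2 ∉ O := hCO Y2 (by simp [hC4])
    have hY3O : Y3 ∉ O := hCO Y3 (by simp [hC4])
    have hY4O : Y4 ∉ O := hCO Y4 (by simp [hC4])
    have hOsub : ∀ o ∈ O, o ∈ N Y1 ∨ o ∈ N Y2 ∨ o ∈ N Y3 ∨ o ∈ N Y4 := by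
      intro o ho
      obtain ⟨Z, hZC, hoZ⟩ := hcv o ho
      rw [hC4] at hZC
      simp only [Finset.mem_insert, Finset.mem_singleton] at hZC
      rcases hZC with rfl | rfl | rfl | rfl
      · exact Or.inl hoZ
      · exact Or.inr (Or.inl hoZ)
      · exact Or.inr (Or.inr (Or.inl hoZ))
      · exact Or.inr (Or.inr (Or.inr hoZ))
    have hsplit : ∀ z ∈ P, z ∉ O → z = Y1 ∨ z = Y2 ∨ z = Y3 ∨ z = Y4 := by
      intro z hz hzO
      have := hPO z hz hzO
      rw [hC4] at this
      simpa using this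
    suffices h : O.card ≤ 5 by omega
    -- ===== sub-lemma M2 : two disjoint non-adjacent pairs =====
    have hM2 : ∀ A B X X', A ∈ P → B ∈ P → X ∈ P → X' ∈ P →
        A ∉ O → B ∉ O → X ∉ O → X' ∉ O →
        A ≠ B → X ≠ X' → B ∉ N A → X' ∉ N X →
        (∀ o ∈ O, o ∈ N A ∨ o ∈ N B ∨ o ∈ N X ∨ o ∈ N X') →
        (∀ z ∈ P, z ∉ O → z = A ∨ z = B ∨ z = X ∨ z = X') →
        O.card ≤ 5 := by
      intro A B X X' hAP hBP hXP hX'P hAO hBO hXO hX'O hAB hXX' hnAB hnXX' hcov hsp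
      obtain ⟨D, hDc, hAD, hBD, hNAD, hNBD, hDcov⟩ := hpair A B hAP hBP hAB hnAB
      obtain ⟨D', hD'c, hXD', hX'D', hNXD', hNX'D', hD'cov⟩ := hpair X X' hXP hX'P hXX' hnXX'
      have hOc2 : ∀ o ∈ O, o ∈ D ∩ O ∨ o ∈ D' ∩ O := by
        intro o ho
        rcases hcov o ho with h | h | h | h
        · exact Or.inl (Finset.mem_inter.2 ⟨hNAD h, ho⟩)
        · exact Or.inl (Finset.mem_inter.2 ⟨hNBD h, ho⟩)
        · exact Or.inr (Finset.mem_inter.2 ⟨hNXD' h, ho⟩)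
        · exact Or.inr (Finset.mem_inter.2 ⟨hNX'D' h, ho⟩)
      have hOcard2 : O.card ≤ (D ∩ O).card + (D' ∩ O).card := two_cover _ _ _ hOc2
      have core : ∀ a b x x', b ∈ P → a ∉ D → b ∉ D → N b ⊆ D → b ∉ D' → x ∈ D → x ∉ D' →
          x' ∉ D → a ∈ D' → a ∉ O → x ∉ O →
          (∀ z ∈ P, z ∉ O → z = a ∨ z = b ∨ z = x ∨ z = x') → O.card ≤ 5 := by
        intro a b x x' hbP haD hbD hNbD hbD' hxD hxD' hx'D haD' haO hxO hsp'
        by_contra hO6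
        push_neg at hO6
        have hNbD' : N b ⊆ D' := hD'cov b hbP hbD'
        have hDO : (D ∩ O).card + 1 ≤ D.card := card_aux1 hxD hxO
        have hD'O : (D' ∩ O).card + 1 ≤ D'.card := card_aux1 haD' haO
        have hOsub2 : O ⊆ (D ∩ O) ∪ (D' ∩ O) := by
          intro o ho
          rcases hOc2 o ho with h | h
          · exact Finset.mem_union_left _ h
          · exact Finset.mem_union_right _ h
        have h1 := Finset.card_le_card hOsub2
        have h2 := Finset.card_union_add_card_inter (D ∩ O) (D' ∩ O)
        have hempty : ∀ z, z ∈ D → z ∈ D' → z ∉ O := by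
          intro z hzD hzD' hzO
          have h3 : 0 < ((D ∩ O) ∩ (D' ∩ O)).card := by
            refine Finset.card_pos.2 ⟨z, ?_⟩
            exact Finset.mem_inter.2 ⟨Finset.mem_inter.2 ⟨hzD, hzO⟩, Finset.mem_inter.2 ⟨hzD', hzO⟩⟩
          omega
        obtain ⟨w, hw⟩ := hpart b hbP
        have hwD : w ∈ D := hNbD hw
        have hwD' : w ∈ D' := hNbD' hw
        have hwO : w ∉ O := hempty w hwD hwD'
        rcases hsp' w (hsub b hbP hw) hwO with h | h | h | h
        · exact haD (h ▸ hwD)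
        · exact hirr b (h ▸ hw)
        · exact hxD' (h ▸ hwD')
        · exact hx'D (h ▸ hwD)
      by_cases hXXD : X ∉ D ∧ X' ∉ D
      · have hOD : O ⊆ D := by
          intro o ho
          rcases hcov o ho with h | h | h | h
          · exact hNAD h
          · exact hNBD h
          · exact hDcov X hXP hXXD.1 h
          · exact hDcov X' hX'P hXXD.2 h
        have := Finset.card_le_card hOD
        omega
      by_cases hABD' : A ∉ D' ∧ B ∉ D'
      · have hOD' : O ⊆ D' := by
          intro o ho
          rcases hcov o ho with h | h | h | h
          · exact hD'cov A hAP hABD'.1 h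
          · exact hD'cov B hBP hABD'.2 h
          · exact hNXD' h
          · exact hNX'D' h
        have := Finset.card_le_card hOD'
        omega
      push_neg at hXXD hABD'
      by_cases hX'D : X' ∈ D
      · by_cases hXD : X ∈ D
        · have hDO : (D ∩ O).card + 2 ≤ D.card := card_aux2 hXX' hXD hX'D hXO hX'O
          by_cases hAD' : A ∈ D'
          · have hD'O := card_aux1 hAD' hAO
            omega
          · have hBD' : B ∈ D' := hABD' hAD'
            have hD'O := card_aux1 hBD' hBO
            omega
        · by_cases hBD' : B ∈ D'
          · by_cases hAD' : A ∈ D'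
            · have hD'O : (D' ∩ O).card + 2 ≤ D'.card := card_aux2 hAB hAD' hBD' hAO hBO
              have hDO := card_aux1 hX'D hX'O
              omega
            · refine core B A X' X hAP hBD hAD hNAD hAD' hX'D hX'D' hXD hBD' hBO hX'O ?_
              intro z hz hzO
              rcases hsp z hz hzO with h | h | h | h
              · exact Or.inr (Or.inl h)
              · exact Or.inl h
              · exact Or.inr (Or.inr (Or.inr h))
              · exact Or.inr (Or.inr (Or.inl h))
          · have hAD' : A ∈ D' := by
              by_contra hAD'
              exact hBD' (hABD' hAD')
            refine core A B X' X hBP hAD hBD hNBD hBD' hX'D hX'D' hXD hAD' hAO hX'O ?_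
            intro z hz hzO
            rcases hsp z hz hzO with h | h | h | h
            · exact Or.inl h
            · exact Or.inr (Or.inl h)
            · exact Or.inr (Or.inr (Or.inr h))
            · exact Or.inr (Or.inr (Or.inl h))
      · have hXD : X ∈ D := by
          by_contra hXD
          exact hX'D (hXXD hXD)
        by_cases hBD' : B ∈ D'
        · by_cases hAD' : A ∈ D'
          · have hD'O : (D' ∩ O).card + 2 ≤ D'.card := card_aux2 hAB hAD' hBD' hAO hBO
            have hDO := card_aux1 hXD hXO
            omega
          · refine core B A X X' hAP hBD hAD hNAD hAD' hXD hXD' hX'D hBD' hBO hXO ?_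
            intro z hz hzO
            rcases hsp z hz hzO with h | h | h | h
            · exact Or.inr (Or.inl h)
            · exact Or.inl h
            · exact Or.inr (Or.inr (Or.inl h))
            · exact Or.inr (Or.inr (Or.inr h))
        · have hAD' : A ∈ D' := by
            by_contra hAD'
            exact hBD' (hABD' hAD')
          exact core A B X X' hBP hAD hBD hNBD hBD' hXD hXD' hX'D hAD' hAO hXO hsp
    -- ===== Star1 : one non-adjacent pair (A,B), everything else adjacent =====
    have hStar1 : ∀ A B X Z, A ∈ P → B ∈ P → X ∈ P → Z ∈ P →
        A ∉ O → B ∉ O → X ∉ O → Z ∉ O →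
        A ≠ B → A ≠ X → A ≠ Z → B ≠ X → B ≠ Z → X ≠ Z →
        B ∉ N A → X ∈ N A → Z ∈ N A → X ∈ N B → Z ∈ N B → Z ∈ N X →
        (∀ o ∈ O, o ∈ N A ∨ o ∈ N B ∨ o ∈ N X ∨ o ∈ N Z) → O.card ≤ 5 := by
      intro A B X Z hAP hBP hXP hZP hAO hBO hXO hZO dAB dAX dAZ dBX dBZ dXZ
        hnAB hax haz hbx hbz hxz hcov
      obtain ⟨D, hDc, hAD, hBD, hNAD, hNBD, hDcov⟩ := hpair A B hAP hBP dAB hnAB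
      have hDO : (D ∩ O).card + 2 ≤ D.card := card_aux2 dXZ (hNAD hax) (hNAD haz) hXO hZO
      have hQX : (N X ∩ O).card + 3 ≤ (N X).card :=
        card_aux3 dAB dAZ dBZ (hsymm A hAP X hax) (hsymm B hBP X hbx) hxz hAO hBO hZO
      have hQZ : (N Z ∩ O).card + 3 ≤ (N Z).card :=
        card_aux3 dAB dAX dBX (hsymm A hAP Z haz) (hsymm B hBP Z hbz) (hsymm X hXP Z hxz)
          hAO hBO hXO
      have hcv3 := three_cover O (D ∩ O) (N X ∩ O) (N Z ∩ O) (by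
        intro o ho
        rcases hcov o ho with h | h | h | h
        · exact Or.inl (Finset.mem_inter.2 ⟨hNAD h, ho⟩)
        · exact Or.inl (Finset.mem_inter.2 ⟨hNBD h, ho⟩)
        · exact Or.inr (Or.inl (Finset.mem_inter.2 ⟨h, ho⟩))
        · exact Or.inr (Or.inr (Finset.mem_inter.2 ⟨h, ho⟩)))
      have := hdeg X hXP
      have := hdeg Z hZP
      omega
    -- ===== Star2 : non-adjacent pairs (A,B),(A,X); Z adjacent to A,B,X; B adjacent X =====
    have hStar2 : ∀ A B X Z, A ∈ P → B ∈ P → X ∈ P → Z ∈ P →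
        A ∉ O → B ∉ O → X ∉ O → Z ∉ O →
        A ≠ B → A ≠ X → B ≠ X → B ≠ Z → X ≠ Z →
        B ∉ N A → Z ∈ N A → X ∈ N B → Z ∈ N B → Z ∈ N X →
        (∀ o ∈ O, o ∈ N A ∨ o ∈ N B ∨ o ∈ N X ∨ o ∈ N Z) → O.card ≤ 5 := by
      intro A B X Z hAP hBP hXP hZP hAO hBO hXO hZO dAB dAX dBX dBZ dXZ
        hnAB haz hbx hbz hxz hcov
      obtain ⟨D, hDc, hAD, hBD, hNAD, hNBD, hDcov⟩ := hpair A B hAP hBP dAB hnAB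
      have hDO : (D ∩ O).card + 2 ≤ D.card := card_aux2 dXZ (hNBD hbx) (hNAD haz) hXO hZO
      have hQX : (N X ∩ O).card + 2 ≤ (N X).card :=
        card_aux2 dBZ (hsymm B hBP X hbx) hxz hBO hZO
      have hQZ : (N Z ∩ O).card + 3 ≤ (N Z).card :=
        card_aux3 dAB dAX dBX (hsymm A hAP Z haz) (hsymm B hBP Z hbz) (hsymm X hXP Z hxz)
          hAO hBO hXO
      have hcv3 := three_cover O (D ∩ O) (N X ∩ O) (N Z ∩ O) (by
        intro o ho
        rcases hcov o ho with h | h | h | h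
        · exact Or.inl (Finset.mem_inter.2 ⟨hNAD h, ho⟩)
        · exact Or.inl (Finset.mem_inter.2 ⟨hNBD h, ho⟩)
        · exact Or.inr (Or.inl (Finset.mem_inter.2 ⟨h, ho⟩))
        · exact Or.inr (Or.inr (Finset.mem_inter.2 ⟨h, ho⟩)))
      have := hdeg X hXP
      have := hdeg Z hZP
      omega
    -- ===== Star3 : A non-adjacent to B, X, Z; B,X,Z pairwise adjacent =====
    have hStar3 : ∀ A B X Z, A ∈ P → B ∈ P → X ∈ P → Z ∈ P →
        A ∉ O → B ∉ O → X ∉ O → Z ∉ O →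
        A ≠ B → A ≠ X → A ≠ Z → B ≠ X → B ≠ Z → X ≠ Z →
        B ∉ N A → X ∉ N A → Z ∉ N A → X ∈ N B → Z ∈ N B → Z ∈ N X →
        (∀ o ∈ O, o ∈ N A ∨ o ∈ N B ∨ o ∈ N X ∨ o ∈ N Z) →
        (∀ z ∈ P, z ∉ O → z = A ∨ z = B ∨ z = X ∨ z = Z) → O.card ≤ 5 := by
      intro A B X Z hAP hBP hXP hZP hAO hBO hXO hZO dAB dAX dAZ dBX dBZ dXZ
        hnAB hnAX hnAZ hbx hbz hxz hcov hsp
      obtain ⟨D1, hD1c, hAD1, hBD1, hNAD1, hNBD1, hD1cov⟩ := hpair A B hAP hBP dAB hnAB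
      obtain ⟨D2, hD2c, hAD2, hXD2, hNAD2, hNXD2, hD2cov⟩ := hpair A X hAP hXP dAX hnAX
      obtain ⟨D3, hD3c, hAD3, hZD3, hNAD3, hNZD3, hD3cov⟩ := hpair A Z hAP hZP dAZ hnAZ
      have hU1 : (D1 ∩ O).card + 2 ≤ D1.card := card_aux2 dXZ (hNBD1 hbx) (hNBD1 hbz) hXO hZO
      have hU2 : (D2 ∩ O).card + 2 ≤ D2.card :=
        card_aux2 dBZ (hNXD2 (hsymm B hBP X hbx)) (hNXD2 hxz) hBO hZO
      have hU3 : (D3 ∩ O).card + 2 ≤ D3.card :=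
        card_aux2 dBX (hNZD3 (hsymm B hBP Z hbz)) (hNZD3 (hsymm X hXP Z hxz)) hBO hXO
      -- N A is contained in O and is nonempty
      have hNAO : ∀ z ∈ N A, z ∈ O := by
        intro z hz
        by_contra hzO
        rcases hsp z (hsub A hAP hz) hzO with h | h | h | h
        · exact hirr A (h ▸ hz)
        · exact hnAB (h ▸ hz)
        · exact hnAX (h ▸ hz)
        · exact hnAZ (h ▸ hz)
      obtain ⟨z0, hz0⟩ := hpart A hAP
      have hz0O : z0 ∈ O := hNAO z0 hz0
      have hz01 : z0 ∈ D1 ∩ O := Finset.mem_inter.2 ⟨hNAD1 hz0, hz0O⟩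
      have hz02 : z0 ∈ D2 ∩ O := Finset.mem_inter.2 ⟨hNAD2 hz0, hz0O⟩
      have hz03 : z0 ∈ D3 ∩ O := Finset.mem_inter.2 ⟨hNAD3 hz0, hz0O⟩
      have hcv3 := three_cover O (D1 ∩ O) ((D2 ∩ O).erase z0) ((D3 ∩ O).erase z0) (by
        intro o ho
        rcases hcov o ho with h | h | h | h
        · exact Or.inl (Finset.mem_inter.2 ⟨hNAD1 h, ho⟩)
        · exact Or.inl (Finset.mem_inter.2 ⟨hNBD1 h, ho⟩)
        · by_cases hoz : o = z0
          · exact Or.inl (hoz ▸ hz01)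
          · exact Or.inr (Or.inl (Finset.mem_erase.2 ⟨hoz, Finset.mem_inter.2 ⟨hNXD2 h, ho⟩⟩))
        · by_cases hoz : o = z0
          · exact Or.inl (hoz ▸ hz01)
          · exact Or.inr (Or.inr (Finset.mem_erase.2 ⟨hoz, Finset.mem_inter.2 ⟨hNZD3 h, ho⟩⟩)))
      have he2 : ((D2 ∩ O).erase z0).card + 1 = (D2 ∩ O).card := by
        rw [Finset.card_erase_of_mem hz02]
        have : 0 < (D2 ∩ O).card := Finset.card_pos.2 ⟨z0, hz02⟩
        omega
      have he3 : ((D3 ∩ O).erase z0).card + 1 = (D3 ∩ O).card := by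
        rw [Finset.card_erase_of_mem hz03]
        have : 0 < (D3 ∩ O).card := Finset.card_pos.2 ⟨z0, hz03⟩
        omega
      omega
    -- ===== Tri : A,B,X pairwise non-adjacent; Z adjacent to each of A,B,X =====
    have hTri : ∀ A B X Z, A ∈ P → B ∈ P → X ∈ P → Z ∈ P →
        A ∉ O → B ∉ O → X ∉ O → Z ∉ O →
        A ≠ B → A ≠ X → B ≠ X →
        B ∉ N A → X ∉ N A → X ∉ N B → Z ∈ N A → Z ∈ N B → Z ∈ N X →
        (∀ o ∈ O, o ∈ N A ∨ o ∈ N B ∨ o ∈ N X ∨ o ∈ N Z) → O.card ≤ 5 := by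
      intro A B X Z hAP hBP hXP hZP hAO hBO hXO hZO dAB dAX dBX
        hnAB hnAX hnBX haz hbz hxz hcov
      obtain ⟨D1, hD1c, hAD1, hBD1, hNAD1, hNBD1, hD1cov⟩ := hpair A B hAP hBP dAB hnAB
      obtain ⟨D2, hD2c, hAD2, hXD2, hNAD2, hNXD2, hD2cov⟩ := hpair A X hAP hXP dAX hnAX
      obtain ⟨D3, hD3c, hBD3, hXD3, hNBD3, hNXD3, hD3cov⟩ := hpair B X hBP hXP dBX hnBX
      have hU1 : (D1 ∩ O).card + 1 ≤ D1.card := card_aux1 (hNAD1 haz) hZO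
      have hU2 : (D2 ∩ O).card + 1 ≤ D2.card := card_aux1 (hNAD2 haz) hZO
      have hU3 : (D3 ∩ O).card + 1 ≤ D3.card := card_aux1 (hNBD3 hbz) hZO
      set QA := N A ∩ O with hQA
      set QB := N B ∩ O with hQB
      set QX := N X ∩ O with hQX
      have hab : (QA ∪ QB).card ≤ (D1 ∩ O).card := by
        refine Finset.card_le_card ?_
        intro x hx
        rcases Finset.mem_union.1 hx with h | h
        · exact Finset.mem_inter.2 ⟨hNAD1 (Finset.mem_inter.1 h).1, (Finset.mem_inter.1 h).2⟩
        · exact Finset.mem_inter.2 ⟨hNBD1 (Finset.mem_inter.1 h).1, (Finset.mem_inter.1 h).2⟩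
      have hax' : (QA ∪ QX).card ≤ (D2 ∩ O).card := by
        refine Finset.card_le_card ?_
        intro x hx
        rcases Finset.mem_union.1 hx with h | h
        · exact Finset.mem_inter.2 ⟨hNAD2 (Finset.mem_inter.1 h).1, (Finset.mem_inter.1 h).2⟩
        · exact Finset.mem_inter.2 ⟨hNXD2 (Finset.mem_inter.1 h).1, (Finset.mem_inter.1 h).2⟩
      have hbx' : (QB ∪ QX).card ≤ (D3 ∩ O).card := by
        refine Finset.card_le_card ?_
        intro x hx
        rcases Finset.mem_union.1 hx with h | h
        · exact Finset.mem_inter.2 ⟨hNBD3 (Finset.mem_inter.1 h).1, (Finset.mem_inter.1 h).2⟩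
        · exact Finset.mem_inter.2 ⟨hNXD3 (Finset.mem_inter.1 h).1, (Finset.mem_inter.1 h).2⟩
      have hun := union3card QA QB QX
      have hQZ : (N Z ∩ O).card + 3 ≤ (N Z).card :=
        card_aux3 dAB dAX dBX (hsymm A hAP Z haz) (hsymm B hBP Z hbz) (hsymm X hXP Z hxz)
          hAO hBO hXO
      have hcv2 := two_cover O (QA ∪ QB ∪ QX) (N Z ∩ O) (by
        intro o ho
        rcases hcov o ho with h | h | h | h
        · exact Or.inl (Finset.mem_union_left _ (Finset.mem_union_left _
            (Finset.mem_inter.2 ⟨h, ho⟩)))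
        · exact Or.inl (Finset.mem_union_left _ (Finset.mem_union_right _
            (Finset.mem_inter.2 ⟨h, ho⟩)))
        · exact Or.inl (Finset.mem_union_right _ (Finset.mem_inter.2 ⟨h, ho⟩))
        · exact Or.inr (Finset.mem_inter.2 ⟨h, ho⟩))
      have := hdeg Z hZP
      omega
    -- ===== dispatch =====
    have covgen : ∀ A B X Z : α,
        (Y1 = A ∨ Y1 = B ∨ Y1 = X ∨ Y1 = Z) → (Y2 = A ∨ Y2 = B ∨ Y2 = X ∨ Y2 = Z) →
        (Y3 = A ∨ Y3 = B ∨ Y3 = X ∨ Y3 = Z) → (Y4 = A ∨ Y4 = B ∨ Y4 = X ∨ Y4 = Z) →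
        ∀ o ∈ O, o ∈ N A ∨ o ∈ N B ∨ o ∈ N X ∨ o ∈ N Z := by
      intro A B X Z h1 h2 h3 h4 o ho
      rcases hOsub o ho with h | h | h | h
      · rcases h1 with rfl | rfl | rfl | rfl
        · exact Or.inl h
        · exact Or.inr (Or.inl h)
        · exact Or.inr (Or.inr (Or.inl h))
        · exact Or.inr (Or.inr (Or.inr h))
      · rcases h2 with rfl | rfl | rfl | rfl
        · exact Or.inl h
        · exact Or.inr (Or.inl h)
        · exact Or.inr (Or.inr (Or.inl h))
        · exact Or.inr (Or.inr (Or.inr h))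
      · rcases h3 with rfl | rfl | rfl | rfl
        · exact Or.inl h
        · exact Or.inr (Or.inl h)
        · exact Or.inr (Or.inr (Or.inl h))
        · exact Or.inr (Or.inr (Or.inr h))
      · rcases h4 with rfl | rfl | rfl | rfl
        · exact Or.inl h
        · exact Or.inr (Or.inl h)
        · exact Or.inr (Or.inr (Or.inl h))
        · exact Or.inr (Or.inr (Or.inr h))
    have spgen : ∀ A B X Z : α,
        (Y1 = A ∨ Y1 = B ∨ Y1 = X ∨ Y1 = Z) → (Y2 = A ∨ Y2 = B ∨ Y2 = X ∨ Y2 = Z) →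
        (Y3 = A ∨ Y3 = B ∨ Y3 = X ∨ Y3 = Z) → (Y4 = A ∨ Y4 = B ∨ Y4 = X ∨ Y4 = Z) →
        ∀ z ∈ P, z ∉ O → z = A ∨ z = B ∨ z = X ∨ z = Z := by
      intro A B X Z h1 h2 h3 h4 z hz hzO
      rcases hsplit z hz hzO with rfl | rfl | rfl | rfl
      · exact h1
      · exact h2
      · exact h3
      · exact h4
    have covp : ∀ o ∈ O, o ∈ N Y1 ∨ o ∈ N Y2 ∨ o ∈ N Y3 ∨ o ∈ N Y4 := hOsub
    by_cases m1 : Y2 ∉ N Y1 ∧ Y4 ∉ N Y3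
    · exact hM2 Y1 Y2 Y3 Y4 hY1P hY2P hY3P hY4P hY1O hY2O hY3O hY4O d12 d34 m1.1 m1.2
        hOsub hsplit
    by_cases m2 : Y3 ∉ N Y1 ∧ Y4 ∉ N Y2
    · exact hM2 Y1 Y3 Y2 Y4 hY1P hY3P hY2P hY4P hY1O hY3O hY2O hY4O d13 d24 m2.1 m2.2
        (covgen Y1 Y3 Y2 Y4 (Or.inl rfl) (Or.inr (Or.inr (Or.inl rfl))) (Or.inr (Or.inl rfl)) (Or.inr (Or.inr (Or.inr rfl))))
        (spgen Y1 Y3 Y2 Y4 (Or.inl rfl) (Or.inr (Or.inr (Or.inl rfl))) (Or.inr (Or.inl rfl)) (Or.inr (Or.inr (Or.inr rfl))))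
    by_cases m3 : Y4 ∉ N Y1 ∧ Y3 ∉ N Y2
    · exact hM2 Y1 Y4 Y2 Y3 hY1P hY4P hY2P hY3P hY1O hY4O hY2O hY3O d14 d23 m3.1 m3.2
        (covgen Y1 Y4 Y2 Y3 (Or.inl rfl) (Or.inr (Or.inr (Or.inl rfl))) (Or.inr (Or.inr (Or.inr rfl))) (Or.inr (Or.inl rfl)))
        (spgen Y1 Y4 Y2 Y3 (Or.inl rfl) (Or.inr (Or.inr (Or.inl rfl))) (Or.inr (Or.inr (Or.inr rfl))) (Or.inr (Or.inl rfl)))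
    push_neg at m1 m2 m3
    by_cases e12 : Y2 ∈ N Y1
    · by_cases e13 : Y3 ∈ N Y1
      · by_cases e14 : Y4 ∈ N Y1
        · by_cases e23 : Y3 ∈ N Y2
          · by_cases e24 : Y4 ∈ N Y2
            · by_cases e34 : Y4 ∈ N Y3
              · -- K4
                have hQ1 := card_aux3 d23 d24 d34 e12 e13 e14 hY2O hY3O hY4O
                have hQ2 := card_aux3 d13 d14 d34 (hsymm Y1 hY1P Y2 e12) e23 e24 hY1O hY3O hY4O
                have hQ3 := card_aux3 d12 d14 d24 (hsymm Y1 hY1P Y3 e13) (hsymm Y2 hY2P Y3 e23)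
                  e34 hY1O hY2O hY4O
                have hQ4 := card_aux3 d12 d13 d23 (hsymm Y1 hY1P Y4 e14) (hsymm Y2 hY2P Y4 e24)
                  (hsymm Y3 hY3P Y4 e34) hY1O hY2O hY3O
                have h4 := four_cover O (N Y1 ∩ O) (N Y2 ∩ O) (N Y3 ∩ O) (N Y4 ∩ O) (by
                  intro o ho
                  rcases hOsub o ho with h | h | h | h
                  · exact Or.inl (Finset.mem_inter.2 ⟨h, ho⟩)
                  · exact Or.inr (Or.inl (Finset.mem_inter.2 ⟨h, ho⟩))
                  · exact Or.inr (Or.inr (Or.inl (Finset.mem_inter.2 ⟨h, ho⟩)))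
                  · exact Or.inr (Or.inr (Or.inr (Finset.mem_inter.2 ⟨h, ho⟩))))
                have := hdeg Y1 hY1P; have := hdeg Y2 hY2P
                have := hdeg Y3 hY3P; have := hdeg Y4 hY4P
                omega
              · exact hStar1 Y3 Y4 Y1 Y2 hY3P hY4P hY1P hY2P hY3O hY4O hY1O hY2O
                  d34 d13.symm d23.symm d14.symm d24.symm d12 e34
                  (hsymm Y1 hY1P Y3 e13) (hsymm Y2 hY2P Y3 e23)
                  (hsymm Y1 hY1P Y4 e14) (hsymm Y2 hY2P Y4 e24) e12
                  (covgen Y3 Y4 Y1 Y2 (Or.inr (Or.inr (Or.inl rfl))) (Or.inr (Or.inr (Or.inr rfl))) (Or.inl rfl) (Or.inr (Or.inl rfl)))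
            · by_cases e34 : Y4 ∈ N Y3
              · exact hStar1 Y2 Y4 Y1 Y3 hY2P hY4P hY1P hY3P hY2O hY4O hY1O hY3O
                  d24 d12.symm d23 d14.symm d34.symm d13 e24
                  (hsymm Y1 hY1P Y2 e12) e23 (hsymm Y1 hY1P Y4 e14)
                  (hsymm Y3 hY3P Y4 e34) e13
                  (covgen Y2 Y4 Y1 Y3 (Or.inr (Or.inr (Or.inl rfl))) (Or.inl rfl) (Or.inr (Or.inr (Or.inr rfl))) (Or.inr (Or.inl rfl)))
              · exact hStar2 Y4 Y2 Y3 Y1 hY4P hY2P hY3P hY1P hY4O hY2O hY3O hY1O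
                  d24.symm d34.symm d23 d12.symm d13.symm
                  (fun h => e24 (hsymm Y4 hY4P Y2 h))
                  (hsymm Y1 hY1P Y4 e14) e23 (hsymm Y1 hY1P Y2 e12)
                  (hsymm Y1 hY1P Y3 e13)
                  (covgen Y4 Y2 Y3 Y1 (Or.inr (Or.inr (Or.inr rfl))) (Or.inr (Or.inl rfl)) (Or.inr (Or.inr (Or.inl rfl))) (Or.inl rfl))
          · by_cases e24 : Y4 ∈ N Y2
            · by_cases e34 : Y4 ∈ N Y3
              · exact hStar1 Y2 Y3 Y1 Y4 hY2P hY3P hY1P hY4P hY2O hY3O hY1O hY4O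
                  d23 d12.symm d24 d13.symm d34 d14 e23
                  (hsymm Y1 hY1P Y2 e12) e24 (hsymm Y1 hY1P Y3 e13) e34 e14
                  (covgen Y2 Y3 Y1 Y4 (Or.inr (Or.inr (Or.inl rfl))) (Or.inl rfl) (Or.inr (Or.inl rfl)) (Or.inr (Or.inr (Or.inr rfl))))
              · exact hStar2 Y3 Y2 Y4 Y1 hY3P hY2P hY4P hY1P hY3O hY2O hY4O hY1O
                  d23.symm d34 d24 d12.symm d14.symm
                  (fun h => e23 (hsymm Y3 hY3P Y2 h))
                  (hsymm Y1 hY1P Y3 e13) e24 (hsymm Y1 hY1P Y2 e12)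
                  (hsymm Y1 hY1P Y4 e14)
                  (covgen Y3 Y2 Y4 Y1 (Or.inr (Or.inr (Or.inr rfl))) (Or.inr (Or.inl rfl)) (Or.inl rfl) (Or.inr (Or.inr (Or.inl rfl))))
            · by_cases e34 : Y4 ∈ N Y3
              · exact hStar2 Y2 Y3 Y4 Y1 hY2P hY3P hY4P hY1P hY2O hY3O hY4O hY1O
                  d23 d24 d34 d13.symm d14.symm e23
                  (hsymm Y1 hY1P Y2 e12) e34 (hsymm Y1 hY1P Y3 e13) (hsymm Y1 hY1P Y4 e14)
                  (covgen Y2 Y3 Y4 Y1 (Or.inr (Or.inr (Or.inr rfl))) (Or.inl rfl) (Or.inr (Or.inl rfl)) (Or.inr (Or.inr (Or.inl rfl))))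
              · exact hTri Y2 Y3 Y4 Y1 hY2P hY3P hY4P hY1P hY2O hY3O hY4O hY1O
                  d23 d24 d34 e23 e24 e34
                  (hsymm Y1 hY1P Y2 e12) (hsymm Y1 hY1P Y3 e13) (hsymm Y1 hY1P Y4 e14)
                  (covgen Y2 Y3 Y4 Y1 (Or.inr (Or.inr (Or.inr rfl))) (Or.inl rfl) (Or.inr (Or.inl rfl)) (Or.inr (Or.inr (Or.inl rfl))))
        · have e23 : Y3 ∈ N Y2 := m3 e14
          by_cases e24 : Y4 ∈ N Y2
          · by_cases e34 : Y4 ∈ N Y3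
            · exact hStar1 Y1 Y4 Y2 Y3 hY1P hY4P hY2P hY3P hY1O hY4O hY2O hY3O
                d14 d12 d13 d24.symm d34.symm d23 e14 e12 e13
                (hsymm Y2 hY2P Y4 e24) (hsymm Y3 hY3P Y4 e34) e23
                (covgen Y1 Y4 Y2 Y3 (Or.inl rfl) (Or.inr (Or.inr (Or.inl rfl))) (Or.inr (Or.inr (Or.inr rfl))) (Or.inr (Or.inl rfl)))
            · exact hStar2 Y4 Y1 Y3 Y2 hY4P hY1P hY3P hY2P hY4O hY1O hY3O hY2O
                d14.symm d34.symm d13 d12 d23.symm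
                (fun h => e14 (hsymm Y4 hY4P Y1 h)) (hsymm Y2 hY2P Y4 e24)
                e13 e12 (hsymm Y2 hY2P Y3 e23)
                (covgen Y4 Y1 Y3 Y2 (Or.inr (Or.inl rfl)) (Or.inr (Or.inr (Or.inr rfl))) (Or.inr (Or.inr (Or.inl rfl))) (Or.inl rfl))
          · by_cases e34 : Y4 ∈ N Y3
            · exact hStar2 Y4 Y1 Y2 Y3 hY4P hY1P hY2P hY3P hY4O hY1O hY2O hY3O
                d14.symm d24.symm d12 d13 d23
                (fun h => e14 (hsymm Y4 hY4P Y1 h)) (hsymm Y3 hY3P Y4 e34)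
                e12 e13 e23
                (covgen Y4 Y1 Y2 Y3 (Or.inr (Or.inl rfl)) (Or.inr (Or.inr (Or.inl rfl))) (Or.inr (Or.inr (Or.inr rfl))) (Or.inl rfl))
            · exact hStar3 Y4 Y1 Y2 Y3 hY4P hY1P hY2P hY3P hY4O hY1O hY2O hY3O
                d14.symm d24.symm d34.symm d12 d13 d23
                (fun h => e14 (hsymm Y4 hY4P Y1 h))
                (fun h => e24 (hsymm Y4 hY4P Y2 h))
                (fun h => e34 (hsymm Y4 hY4P Y3 h))
                e12 e13 e23
                (covgen Y4 Y1 Y2 Y3 (Or.inr (Or.inl rfl)) (Or.inr (Or.inr (Or.inl rfl))) (Or.inr (Or.inr (Or.inr rfl))) (Or.inl rfl))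
                (spgen Y4 Y1 Y2 Y3 (Or.inr (Or.inl rfl)) (Or.inr (Or.inr (Or.inl rfl))) (Or.inr (Or.inr (Or.inr rfl))) (Or.inl rfl))
      · have e24 : Y4 ∈ N Y2 := m2 e13
        by_cases e14 : Y4 ∈ N Y1
        · by_cases e23 : Y3 ∈ N Y2
          · by_cases e34 : Y4 ∈ N Y3
            · exact hStar1 Y1 Y3 Y2 Y4 hY1P hY3P hY2P hY4P hY1O hY3O hY2O hY4O
                d13 d12 d14 d23.symm d34 d24 e13 e12 e14
                (hsymm Y2 hY2P Y3 e23) e34 e24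
                (covgen Y1 Y3 Y2 Y4 (Or.inl rfl) (Or.inr (Or.inr (Or.inl rfl))) (Or.inr (Or.inl rfl)) (Or.inr (Or.inr (Or.inr rfl))))
            · exact hStar2 Y3 Y1 Y4 Y2 hY3P hY1P hY4P hY2P hY3O hY1O hY4O hY2O
                d13.symm d34 d14 d12 d24.symm
                (fun h => e13 (hsymm Y3 hY3P Y1 h)) (hsymm Y2 hY2P Y3 e23)
                e14 e12 (hsymm Y2 hY2P Y4 e24)
                (covgen Y3 Y1 Y4 Y2 (Or.inr (Or.inl rfl)) (Or.inr (Or.inr (Or.inr rfl))) (Or.inl rfl) (Or.inr (Or.inr (Or.inl rfl))))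
          · by_cases e34 : Y4 ∈ N Y3
            · exact hStar2 Y3 Y1 Y2 Y4 hY3P hY1P hY2P hY4P hY3O hY1O hY2O hY4O
                d13.symm d23.symm d12 d14 d24
                (fun h => e13 (hsymm Y3 hY3P Y1 h)) e34 e12 e14 e24
                (covgen Y3 Y1 Y2 Y4 (Or.inr (Or.inl rfl)) (Or.inr (Or.inr (Or.inl rfl))) (Or.inl rfl) (Or.inr (Or.inr (Or.inr rfl))))
            · exact hStar3 Y3 Y1 Y2 Y4 hY3P hY1P hY2P hY4P hY3O hY1O hY2O hY4O
                d13.symm d23.symm d34 d12 d14 d24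
                (fun h => e13 (hsymm Y3 hY3P Y1 h))
                (fun h => e23 (hsymm Y3 hY3P Y2 h))
                e34 e12 e14 e24
                (covgen Y3 Y1 Y2 Y4 (Or.inr (Or.inl rfl)) (Or.inr (Or.inr (Or.inl rfl))) (Or.inl rfl) (Or.inr (Or.inr (Or.inr rfl))))
                (spgen Y3 Y1 Y2 Y4 (Or.inr (Or.inl rfl)) (Or.inr (Or.inr (Or.inl rfl))) (Or.inl rfl) (Or.inr (Or.inr (Or.inr rfl))))
        · have e23 : Y3 ∈ N Y2 := m3 e14
          by_cases e34 : Y4 ∈ N Y3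
          · exact hStar2 Y1 Y3 Y4 Y2 hY1P hY3P hY4P hY2P hY1O hY3O hY4O hY2O
              d13 d14 d34 d23.symm d24.symm e13 e12 e34
              (hsymm Y2 hY2P Y3 e23) (hsymm Y2 hY2P Y4 e24)
              (covgen Y1 Y3 Y4 Y2 (Or.inl rfl) (Or.inr (Or.inr (Or.inr rfl))) (Or.inr (Or.inl rfl)) (Or.inr (Or.inr (Or.inl rfl))))
          · exact hTri Y1 Y3 Y4 Y2 hY1P hY3P hY4P hY2P hY1O hY3O hY4O hY2O
              d13 d14 d34 e13 e14 e34 e12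
              (hsymm Y2 hY2P Y3 e23) (hsymm Y2 hY2P Y4 e24)
              (covgen Y1 Y3 Y4 Y2 (Or.inl rfl) (Or.inr (Or.inr (Or.inr rfl))) (Or.inr (Or.inl rfl)) (Or.inr (Or.inr (Or.inl rfl))))
    · have e34 : Y4 ∈ N Y3 := m1 e12
      by_cases e13 : Y3 ∈ N Y1
      · by_cases e14 : Y4 ∈ N Y1
        · by_cases e23 : Y3 ∈ N Y2
          · by_cases e24 : Y4 ∈ N Y2
            · exact hStar1 Y1 Y2 Y3 Y4 hY1P hY2P hY3P hY4P hY1O hY2O hY3O hY4O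
                d12 d13 d14 d23 d24 d34 e12 e13 e14 e23 e24 e34 hOsub
            · exact hStar2 Y2 Y1 Y4 Y3 hY2P hY1P hY4P hY3P hY2O hY1O hY4O hY3O
                d12.symm d24 d14 d13 d34.symm
                (fun h => e12 (hsymm Y2 hY2P Y1 h)) e23 e14 e13
                (hsymm Y3 hY3P Y4 e34)
                (covgen Y2 Y1 Y4 Y3 (Or.inr (Or.inl rfl)) (Or.inl rfl) (Or.inr (Or.inr (Or.inr rfl))) (Or.inr (Or.inr (Or.inl rfl))))
          · by_cases e24 : Y4 ∈ N Y2
            · exact hStar2 Y2 Y1 Y3 Y4 hY2P hY1P hY3P hY4P hY2O hY1O hY3O hY4O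
                d12.symm d23 d13 d14 d34
                (fun h => e12 (hsymm Y2 hY2P Y1 h)) e24 e13 e14 e34
                (covgen Y2 Y1 Y3 Y4 (Or.inr (Or.inl rfl)) (Or.inl rfl) (Or.inr (Or.inr (Or.inl rfl))) (Or.inr (Or.inr (Or.inr rfl))))
            · exact hStar3 Y2 Y1 Y3 Y4 hY2P hY1P hY3P hY4P hY2O hY1O hY3O hY4O
                d12.symm d23 d24 d13 d14 d34
                (fun h => e12 (hsymm Y2 hY2P Y1 h)) e23 e24 e13 e14 e34
                (covgen Y2 Y1 Y3 Y4 (Or.inr (Or.inl rfl)) (Or.inl rfl) (Or.inr (Or.inr (Or.inl rfl))) (Or.inr (Or.inr (Or.inr rfl))))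
                (spgen Y2 Y1 Y3 Y4 (Or.inr (Or.inl rfl)) (Or.inl rfl) (Or.inr (Or.inr (Or.inl rfl))) (Or.inr (Or.inr (Or.inr rfl))))
        · have e23 : Y3 ∈ N Y2 := m3 e14
          by_cases e24 : Y4 ∈ N Y2
          · exact hStar2 Y1 Y2 Y4 Y3 hY1P hY2P hY4P hY3P hY1O hY2O hY4O hY3O
              d12 d14 d24 d23 d34.symm e12 e13 e24 e23
              (hsymm Y3 hY3P Y4 e34)
              (covgen Y1 Y2 Y4 Y3 (Or.inl rfl) (Or.inr (Or.inl rfl)) (Or.inr (Or.inr (Or.inr rfl))) (Or.inr (Or.inr (Or.inl rfl))))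
          · exact hTri Y1 Y2 Y4 Y3 hY1P hY2P hY4P hY3P hY1O hY2O hY4O hY3O
              d12 d14 d24 e12 e14 e24 e13 e23
              (hsymm Y3 hY3P Y4 e34)
              (covgen Y1 Y2 Y4 Y3 (Or.inl rfl) (Or.inr (Or.inl rfl)) (Or.inr (Or.inr (Or.inr rfl))) (Or.inr (Or.inr (Or.inl rfl))))
      · have e24 : Y4 ∈ N Y2 := m2 e13
        by_cases e14 : Y4 ∈ N Y1
        · by_cases e23 : Y3 ∈ N Y2
          · exact hStar2 Y1 Y2 Y3 Y4 hY1P hY2P hY3P hY4P hY1O hY2O hY3O hY4O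
              d12 d13 d23 d24 d34 e12 e14 e23 e24 e34 hOsub
          · exact hTri Y1 Y2 Y3 Y4 hY1P hY2P hY3P hY4P hY1O hY2O hY3O hY4O
              d12 d13 d23 e12 e13 e23 e14 e24 e34 hOsub
        · have e23 : Y3 ∈ N Y2 := m3 e14
          exact hStar3 Y1 Y2 Y3 Y4 hY1P hY2P hY3P hY4P hY1O hY2O hY3O hY4O
            d12 d13 d14 d23 d24 d34 e12 e13 e14 e23 e24 e34 hOsub hsplit

private lemma cubic_coalition_card_le {V : Type*} [Fintype V] [DecidableEq V]
    (G : SimpleGraph V) [DecidableRel G.Adj] (hG : G.IsRegularOfDegree 3)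
    (P : Finset (Finset V)) (hP : G.IsCoalitionPartition P) : P.card ≤ 9 := by
  classical
  obtain ⟨hne, hdisj, hcov, hparts⟩ := hP
  have hPV : P.card ≤ Fintype.card V := by
    have h1 : ∀ A ∈ P, 1 ≤ A.card := fun A hA => Finset.card_pos.2 (hne A hA)
    have h2 : P.card ≤ ∑ A ∈ P, A.card := by
      calc P.card = ∑ _A ∈ P, 1 := by simp
        _ ≤ ∑ A ∈ P, A.card := Finset.sum_le_sum h1
    have h3 : (P.biUnion id).card = ∑ A ∈ P, A.card :=
      Finset.card_biUnion (fun x hx y hy hxy => hdisj x hx y hy hxy)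
    have h4 : (P.biUnion id).card ≤ Fintype.card V := Finset.card_le_univ _
    omega
  by_cases hV9 : Fintype.card V ≤ 9
  · omega
  push_neg at hV9
  have hnd : ∀ A ∈ P, ¬ G.IsDominatingSet A ∧
      ∃ B ∈ P, B ≠ A ∧ G.IsDominatingSet (A ∪ B) := by
    intro A hA
    rcases hparts A hA with ⟨v, hAv, hdom⟩ | ⟨h1, B, hB, hBA, _, hdomAB⟩
    · exfalso
      have huniv : (Finset.univ : Finset V) ⊆ insert v (G.neighborFinset v) := by
        intro x _
        have hdx : x ∈ A ∨ ∃ u ∈ A, G.Adj u x := hdom x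
        rcases hdx with hx | ⟨u, hu, hadj⟩
        · rw [hAv, Finset.mem_singleton] at hx
          rw [hx]
          exact Finset.mem_insert_self _ _
        · rw [hAv, Finset.mem_singleton] at hu
          rw [hu] at hadj
          exact Finset.mem_insert_of_mem ((G.mem_neighborFinset v x).2 hadj)
      have h5 : Fintype.card V ≤ (insert v (G.neighborFinset v)).card := by
        rw [← Finset.card_univ]
        exact Finset.card_le_card huniv
      have h6 : (insert v (G.neighborFinset v)).card ≤ (G.neighborFinset v).card + 1 :=
        Finset.card_insert_le _ _
      have h7 : (G.neighborFinset v).card = 3 := by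
        rw [G.card_neighborFinset_eq_degree v]
        exact hG v
      omega
    · exact ⟨h1, B, hB, hBA, hdomAB⟩
  have hVne : Nonempty V := Fintype.card_pos_iff.1 (by omega)
  obtain ⟨u⟩ := hVne
  set nb : V → Finset V := fun w => insert w (G.neighborFinset w) with hnb
  have hnbcard : ∀ w, (nb w).card = 4 := by
    intro w
    rw [hnb]
    simp only []
    rw [Finset.card_insert_of_notMem (by simp), G.card_neighborFinset_eq_degree, hG w]
  set Tw : V → Finset (Finset V) := fun w => P.filter (fun A => (A ∩ nb w).Nonempty) with hTw
  have hTsub : ∀ w, Tw w ⊆ P := fun w => Finset.filter_subset _ _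
  have hTmem : ∀ w A, A ∈ Tw w ↔ A ∈ P ∧ (A ∩ nb w).Nonempty := by
    intro w A
    rw [hTw]
    exact Finset.mem_filter
  have hTcard : ∀ w, (Tw w).card ≤ 4 := by
    intro w
    have hle : (Tw w).card ≤ (nb w).card := by
      apply Finset.card_le_card_of_injOn
        (fun A => if h : (A ∩ nb w).Nonempty then h.choose else u)
      · intro A hA
        have hA' := ((hTmem w A).1 hA).2
        dsimp only
        rw [dif_pos hA']
        exact (Finset.mem_inter.1 hA'.choose_spec).2
      · intro A hA B hB hfAB
        have hA' := (hTmem w A).1 (Finset.mem_coe.1 hA)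
        have hB' := (hTmem w B).1 (Finset.mem_coe.1 hB)
        dsimp only at hfAB
        rw [dif_pos hA'.2, dif_pos hB'.2] at hfAB
        by_contra hAB
        have hxA := (Finset.mem_inter.1 hA'.2.choose_spec).1
        have hxB := (Finset.mem_inter.1 hB'.2.choose_spec).1
        rw [hfAB] at hxA
        exact Finset.disjoint_left.1 (hdisj A hA'.1 B hB'.1 hAB) hxA hxB
    have := hnbcard w
    omega
  have hTcover : ∀ w A B, A ∈ P → B ∈ P → G.IsDominatingSet (A ∪ B) →
      A ∈ Tw w ∨ B ∈ Tw w := by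
    intro w A B hA hB hdom
    have hdx : w ∈ A ∪ B ∨ ∃ x ∈ A ∪ B, G.Adj x w := hdom w
    have hmem : ∃ x, x ∈ (A ∪ B) ∩ nb w := by
      rcases hdx with hx | ⟨x, hx, hadj⟩
      · exact ⟨w, Finset.mem_inter.2 ⟨hx, Finset.mem_insert_self _ _⟩⟩
      · refine ⟨x, Finset.mem_inter.2 ⟨hx, ?_⟩⟩
        exact Finset.mem_insert_of_mem ((G.mem_neighborFinset w x).2 hadj.symm)
    obtain ⟨x, hx⟩ := hmem
    have hxu := (Finset.mem_inter.1 hx).1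
    have hxn := (Finset.mem_inter.1 hx).2
    rcases Finset.mem_union.1 hxu with h | h
    · exact Or.inl ((hTmem w A).2 ⟨hA, ⟨x, Finset.mem_inter.2 ⟨h, hxn⟩⟩⟩)
    · exact Or.inr ((hTmem w B).2 ⟨hB, ⟨x, Finset.mem_inter.2 ⟨h, hxn⟩⟩⟩)
  have hTnotm : ∀ (A : Finset V), ¬ G.IsDominatingSet A → ∃ w, A ∩ nb w = ∅ := by
    intro A hA
    by_contra hall
    push_neg at hall
    apply hA
    intro x
    obtain ⟨y, hy⟩ := hall x
    have hyA := (Finset.mem_inter.1 hy).1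
    have hynb := (Finset.mem_inter.1 hy).2
    rcases Finset.mem_insert.1 hynb with rfl | hyn
    · exact Or.inl hyA
    · exact Or.inr ⟨y, hyA, ((G.mem_neighborFinset x y).1 hyn).symm⟩
  set N : Finset V → Finset (Finset V) :=
    fun A => P.filter (fun B => B ≠ A ∧ G.IsDominatingSet (A ∪ B)) with hN
  have hNmem : ∀ A B, B ∈ N A ↔ B ∈ P ∧ B ≠ A ∧ G.IsDominatingSet (A ∪ B) := by
    intro A B
    rw [hN]
    exact Finset.mem_filter
  have hsub : ∀ A ∈ P, N A ⊆ P := fun A _ => Finset.filter_subset _ _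
  have hirr : ∀ A : Finset V, A ∉ N A := fun A hA => ((hNmem A A).1 hA).2.1 rfl
  have hsymm : ∀ A ∈ P, ∀ B ∈ N A, A ∈ N B := by
    intro A hA B hB
    obtain ⟨hBP, hBA, hdom⟩ := (hNmem A B).1 hB
    refine (hNmem B A).2 ⟨hA, hBA.symm.symm.symm, ?_⟩
    rwa [Finset.union_comm]
  have hNT : ∀ A, A ∈ P → ∀ w, A ∩ nb w = ∅ → N A ⊆ Tw w := by
    intro A hAP w hAw B hB
    obtain ⟨hBP, hBA, hdom⟩ := (hNmem A B).1 hB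
    rcases hTcover w A B hAP hBP hdom with h | h
    · exfalso
      obtain ⟨x, hx⟩ := ((hTmem w A).1 h).2
      rw [hAw] at hx
      exact Finset.notMem_empty x hx
    · exact h
  have hnotT : ∀ A w, A ∩ nb w = ∅ → A ∉ Tw w := by
    intro A w hAw hmem
    obtain ⟨x, hx⟩ := ((hTmem w A).1 hmem).2
    rw [hAw] at hx
    exact Finset.notMem_empty x hx
  have hdeg : ∀ A ∈ P, (N A).card ≤ 4 := by
    intro A hA
    obtain ⟨w, hw⟩ := hTnotm A (hnd A hA).1
    exact le_trans (Finset.card_le_card (hNT A hA w hw)) (hTcard w)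
  have hpart : ∀ A ∈ P, (N A).Nonempty := by
    intro A hA
    obtain ⟨_, B, hBP, hBA, hdom⟩ := hnd A hA
    exact ⟨B, (hNmem A B).2 ⟨hBP, hBA, hdom⟩⟩
  have hpair : ∀ A B, A ∈ P → B ∈ P → A ≠ B → B ∉ N A →
      ∃ D, D.card ≤ 4 ∧ A ∉ D ∧ B ∉ D ∧ N A ⊆ D ∧ N B ⊆ D ∧
        ∀ X ∈ P, X ∉ D → N X ⊆ D := by
    intro A B hA hB hAB hBNA
    have hndom : ¬ G.IsDominatingSet (A ∪ B) := by
      intro hdom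
      exact hBNA ((hNmem A B).2 ⟨hB, hAB.symm, hdom⟩)
    obtain ⟨w, hw⟩ := hTnotm (A ∪ B) hndom
    have hAw : A ∩ nb w = ∅ := by
      have hsub' : A ∩ nb w ⊆ (A ∪ B) ∩ nb w :=
        Finset.inter_subset_inter Finset.subset_union_left (Finset.Subset.refl _)
      rw [hw] at hsub'
      exact Finset.subset_empty.1 hsub'
    have hBw : B ∩ nb w = ∅ := by
      have hsub' : B ∩ nb w ⊆ (A ∪ B) ∩ nb w :=
        Finset.inter_subset_inter Finset.subset_union_right (Finset.Subset.refl _)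
      rw [hw] at hsub'
      exact Finset.subset_empty.1 hsub'
    refine ⟨Tw w, hTcard w, hnotT A w hAw, hnotT B w hBw,
      hNT A hA w hAw, hNT B hB w hBw, ?_⟩
    intro X hX hXD Z hZ
    obtain ⟨hZP, hZX, hdom⟩ := (hNmem X Z).1 hZ
    rcases hTcover w X Z hX hZP hdom with h | h
    · exact absurd h hXD
    · exact h
  refine coalition_abstract P (Tw u) N hsub hirr hsymm hdeg hpart (hTsub u) (hTcard u) ?_ hpair
  intro X hX hXC Z hZ
  obtain ⟨hZP, hZX, hdom⟩ := (hNmem X Z).1 hZ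
  rcases hTcover u X Z hX hZP hdom with h | h
  · exact absurd h hXC
  · exact h

/-- For every cubic graph `G`, the coalition number satisfies `C(G) ≤ 9`. -/
theorem coalitionNumber_le_nine_of_cubic {V : Type*} [Fintype V] [DecidableEq V]
    (G : SimpleGraph V) [DecidableRel G.Adj] (hG : G.IsRegularOfDegree 3) :
    G.coalitionNumber ≤ 9 := by
  classical
  refine csSup_le' ?_
  rintro k ⟨Pp, hPart, rfl⟩
  exact cubic_coalition_card_le G hG Pp hPart
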